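/- Let (S_j°)_{1≤j≤k} be real random variables adapted to a filtration, D_j° = S_j° − E[S_j° | F_{(j−1)m}], and (V_k°)² = Σ_{j=1}^k (S_j°)². If (V_k°)² ≥ (1/2) n σ² and each ‖E[S_j° | F_{(j−1)m}]‖_∞ ≤ ‖E[S_m | F_0]‖_∞ =: B, then | Σ_{j=1}^k (D_j°)² / (V_k°)² − 1 | ≤ (2√(2k)/(√n σ)) B + (2/(m σ²)) B², where k = ⌊n/m⌋. -/

import Mathlib

open MeasureTheory Finset

set_option maxHeartbeats 1600000 in
/-- If `(V_k°)² ≥ (1/2) n σ²` and `‖E[S_j° | 𝓕_{(j−1)m}]‖_∞ ≤ B` for every `j`, then with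
`D_j° = S_j° − E[S_j° | 𝓕_{(j−1)m}]` and `k = ⌊n/m⌋`,
`|Σ_{j=1}^k (D_j°)²/(V_k°)² − 1| ≤ (2√(2k)/(√n σ)) B + (2/(m σ²)) B²`. -/
theorem block_quadratic_variation_ratio
    {Ω : Type*} [m0 : MeasurableSpace Ω] (μ : Measure Ω) [IsProbabilityMeasure μ]
    (𝓕 : ℕ → MeasurableSpace Ω) (h𝓕 : ∀ i, 𝓕 i ≤ m0)
    (n m k : ℕ) (hn : 0 < n) (hm : 0 < m) (hk : k = n / m)
    (σ B : ℝ) (hσ : 0 < σ) (hB : 0 ≤ B)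
    (S : ℕ → Ω → ℝ) (hint : ∀ j, Integrable (S j) μ)
    (hBj : ∀ j ∈ Finset.Icc 1 k, ∀ᵐ ω ∂μ, |(μ[S j | 𝓕 ((j - 1) * m)]) ω| ≤ B)
    (hV : ∀ᵐ ω ∂μ, (n : ℝ) * σ ^ 2 / 2 ≤ ∑ j ∈ Finset.Icc 1 k, (S j ω) ^ 2) :
    ∀ᵐ ω ∂μ,
      |(∑ j ∈ Finset.Icc 1 k, (S j ω - (μ[S j | 𝓕 ((j - 1) * m)]) ω) ^ 2) /
          (∑ j ∈ Finset.Icc 1 k, (S j ω) ^ 2) - 1| ≤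
        2 * Real.sqrt (2 * k) / (Real.sqrt n * σ) * B + 2 / (m * σ ^ 2) * B ^ 2 := by
  have hBall : ∀ᵐ ω ∂μ, ∀ j ∈ Finset.Icc 1 k, |(μ[S j | 𝓕 ((j - 1) * m)]) ω| ≤ B :=
    (Filter.eventually_all_finset _).2 hBj
  filter_upwards [hBall, hV] with ω hE hVω
  set a : ℕ → ℝ := fun j => S j ω with ha
  set e : ℕ → ℝ := fun j => (μ[S j | 𝓕 ((j - 1) * m)]) ω with he
  set A : ℝ := ∑ j ∈ Finset.Icc 1 k, a j ^ 2 with hAdef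
  set E2 : ℝ := ∑ j ∈ Finset.Icc 1 k, e j ^ 2 with hE2def
  set C : ℝ := ∑ j ∈ Finset.Icc 1 k, a j * e j with hCdef
  have hApos : 0 < A := lt_of_lt_of_le (by positivity) hVω
  -- expand the numerator
  have hexp : (∑ j ∈ Finset.Icc 1 k, (a j - e j) ^ 2) = A - 2 * C + E2 := by
    rw [hAdef, hE2def, hCdef, Finset.mul_sum, ← Finset.sum_sub_distrib,
      ← Finset.sum_add_distrib]
    exact Finset.sum_congr rfl fun j _ => by ring
  rw [show (∑ j ∈ Finset.Icc 1 k, (S j ω - (μ[S j | 𝓕 ((j - 1) * m)]) ω) ^ 2)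
      = ∑ j ∈ Finset.Icc 1 k, (a j - e j) ^ 2 from rfl, hexp]
  have hratio : (A - 2 * C + E2) / A - 1 = (E2 - 2 * C) / A := by
    field_simp
    ring
  rw [hratio, abs_div, abs_of_pos hApos, div_le_iff₀ hApos]
  -- Cauchy-Schwarz
  set s : ℝ := Real.sqrt A with hsdef
  set t : ℝ := Real.sqrt E2 with htdef
  have hs0 : 0 ≤ s := Real.sqrt_nonneg _
  have ht0 : 0 ≤ t := Real.sqrt_nonneg _
  have hs2 : s ^ 2 = A := Real.sq_sqrt hApos.le
  have ht2 : t ^ 2 = E2 := Real.sq_sqrt (by positivity)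
  have hC1 : C ≤ s * t := Real.sum_mul_le_sqrt_mul_sqrt _ _ _
  have hC2 : -C ≤ s * t := by
    have := Real.sum_mul_le_sqrt_mul_sqrt (Finset.Icc 1 k) a (fun j => -(e j))
    simp only [mul_neg, Finset.sum_neg_distrib, neg_sq] at this
    simpa [hCdef, hsdef, htdef, ← Finset.sum_neg_distrib] using this
  have hCabs : |C| ≤ s * t := abs_le.2 ⟨by linarith, hC1⟩
  -- bound on E2
  set K : ℝ := Real.sqrt k with hKdef
  have hK0 : 0 ≤ K := Real.sqrt_nonneg _
  have hK2 : K ^ 2 = (k : ℝ) := Real.sq_sqrt (by positivity)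
  have hE2le : E2 ≤ (k : ℝ) * B ^ 2 := by
    calc E2 ≤ ∑ _j ∈ Finset.Icc 1 k, B ^ 2 := by
            apply Finset.sum_le_sum
            intro j hj
            have := hE j hj
            nlinarith [abs_nonneg (e j), le_abs_self (e j), neg_abs_le (e j)]
      _ = (k : ℝ) * B ^ 2 := by simp [Nat.Icc_eq_range', mul_comm]
  have htKB : t ≤ K * B := by
    have : t ≤ Real.sqrt ((k : ℝ) * B ^ 2) := Real.sqrt_le_sqrt hE2le
    rwa [Real.sqrt_mul (by positivity), Real.sqrt_sq hB] at this
  -- lower bound on s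
  have hslow : Real.sqrt n * σ ≤ Real.sqrt 2 * s := by
    have h1 : (Real.sqrt n * σ) ^ 2 ≤ (Real.sqrt 2 * s) ^ 2 := by
      rw [mul_pow, mul_pow, Real.sq_sqrt (by positivity : (0:ℝ) ≤ (n:ℝ)),
        Real.sq_sqrt (by norm_num : (0:ℝ) ≤ 2), hs2]
      linarith
    have h2 := Real.sqrt_le_sqrt h1
    rwa [Real.sqrt_sq (by positivity), Real.sqrt_sq (by positivity)] at h2
  have hkm : (k : ℝ) * m ≤ (n : ℝ) := by
    have : k * m ≤ n := hk ▸ Nat.div_mul_le_self n m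
    exact_mod_cast this
  have hkm2 : (k : ℝ) * m * σ ^ 2 ≤ 2 * s ^ 2 := by
    rw [hs2]
    nlinarith [sq_nonneg σ]
  -- final bound
  have hr : (0 : ℝ) < Real.sqrt n * σ := by positivity
  have hmσ : (0 : ℝ) < (m : ℝ) * σ ^ 2 := by positivity
  have hsqrt2k : Real.sqrt (2 * (k : ℝ)) = Real.sqrt 2 * K :=
    Real.sqrt_mul (by norm_num) _
  have term1 : 2 * (s * t) ≤ 2 * Real.sqrt (2 * k) / (Real.sqrt n * σ) * B * A := by
    rw [hsqrt2k, ← hs2, div_mul_eq_mul_div, div_mul_eq_mul_div, le_div_iff₀ hr]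
    have q1 : t * (Real.sqrt n * σ) ≤ K * B * (Real.sqrt 2 * s) :=
      mul_le_mul htKB hslow hr.le (mul_nonneg hK0 hB)
    have q2 := mul_le_mul_of_nonneg_left q1 hs0
    linarith [q2]
  have term2 : E2 ≤ 2 / ((m : ℝ) * σ ^ 2) * B ^ 2 * A := by
    rw [← hs2, div_mul_eq_mul_div, div_mul_eq_mul_div, le_div_iff₀ hmσ]
    have p1 := mul_le_mul_of_nonneg_right hE2le hmσ.le
    have p2 := mul_le_mul_of_nonneg_left hkm2 (sq_nonneg B)
    linarith [p1, p2]
  have habs : |E2 - 2 * C| ≤ E2 + 2 * (s * t) := by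
    have h1 : |E2 - 2 * C| ≤ |E2| + 2 * |C| := by
      calc |E2 - 2 * C| ≤ |E2| + |2 * C| := abs_sub _ _
        _ = |E2| + 2 * |C| := by rw [abs_mul]; norm_num
    have h2 : |E2| = E2 := abs_of_nonneg (by positivity)
    linarith
  calc |E2 - 2 * C| ≤ E2 + 2 * (s * t) := habs
    _ ≤ 2 * Real.sqrt (2 * k) / (Real.sqrt n * σ) * B * A
        + 2 / ((m : ℝ) * σ ^ 2) * B ^ 2 * A := by linarith
    _ = (2 * Real.sqrt (2 * k) / (Real.sqrt n * σ) * B + 2 / (m * σ ^ 2) * B ^ 2) * A := by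
        ring
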